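/- Let σ² ≥ 2 log(1.25/δ) (Δ/ε)² with 0 < ε ≤ 1 and Z ~ N(0, σ²). Define the privacy loss L(z) = log(f(z)/f(z + Δ)) = (2zΔ + Δ²)/(2σ²), where f is the density of N(0,σ²). Then P(|L(Z)| > ε) ≤ δ. -/

import Mathlib

open MeasureTheory ProbabilityTheory

section auxGaussTail
open Real Set NNReal ENNReal

lemma gauss_neg (v : ℝ≥0) (hv : v ≠ 0) (s : ℝ) :
    gaussianReal 0 v (Set.Iio (-s)) = gaussianReal 0 v (Set.Ioi s) := by
  have h1 : (NNReal.mk ((-1:ℝ)^2) (sq_nonneg _)) = 1 := by ext; norm_num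
  have hmap := gaussianReal_map_const_mul (μ := 0) (v := v) (-1)
  rw [h1, one_mul, mul_zero] at hmap
  have : gaussianReal 0 v (Set.Ioi s)
      = (gaussianReal 0 v).map (fun x => (-1:ℝ) * x) (Set.Ioi s) := by rw [hmap]
  rw [this, Measure.map_apply (by fun_prop) measurableSet_Ioi]
  congr 1
  ext x
  simp only [Set.mem_preimage, Set.mem_Ioi, Set.mem_Iio]
  constructor <;> intro h <;> linarith

lemma gauss_half (v : ℝ≥0) (hv : v ≠ 0) :
    gaussianReal 0 v (Set.Ioi 0) = 1/2 := by
  have hsing : gaussianReal 0 v ({0} : Set ℝ) = 0 :=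
    gaussianReal_absolutelyContinuous 0 hv Real.volume_singleton
  have hcompl : gaussianReal 0 v ({(0:ℝ)}ᶜ) = 1 := by
    rw [measure_compl (measurableSet_singleton 0) (measure_ne_top _ _), hsing, measure_univ,
      tsub_zero]
  have hunion : ({(0:ℝ)}ᶜ : Set ℝ) = Set.Iio 0 ∪ Set.Ioi 0 := by
    ext x
    simp only [Set.mem_compl_iff, Set.mem_singleton_iff, Set.mem_union, Set.mem_Iio, Set.mem_Ioi]
    exact ⟨fun h => (Ne.lt_or_gt h), fun h => h.elim (fun h' => h'.ne) (fun h' => h'.ne')⟩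
  have hdisj : Disjoint (Set.Iio (0:ℝ)) (Set.Ioi 0) := by
    rw [Set.disjoint_left]; intro x hx hx'
    exact absurd (lt_trans (Set.mem_Ioi.mp hx') (Set.mem_Iio.mp hx)) (lt_irrefl _)
  have hsum : gaussianReal 0 v (Set.Iio 0) + gaussianReal 0 v (Set.Ioi 0) = 1 := by
    rw [← measure_union hdisj measurableSet_Ioi, ← hunion, hcompl]
  have hneg := gauss_neg v hv 0
  rw [neg_zero] at hneg
  rw [hneg] at hsum
  have h2 : (2 : ℝ≥0∞) * gaussianReal 0 v (Set.Ioi 0) = 1 := by rw [two_mul]; exact hsum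
  rw [ENNReal.eq_div_iff (by norm_num) (by norm_num)]
  exact h2

lemma gauss_shift (v : ℝ≥0) (hv : v ≠ 0) (s : ℝ) :
    gaussianReal s v (Set.Ioi s) = gaussianReal 0 v (Set.Ioi 0) := by
  have hmap := gaussianReal_map_add_const (μ := 0) (v := v) s
  rw [zero_add] at hmap
  rw [← hmap, Measure.map_apply (by fun_prop) measurableSet_Ioi]
  congr 1
  ext x
  simp only [Set.mem_preimage, Set.mem_Ioi]
  constructor <;> intro h <;> linarith

lemma gauss_tail (v : ℝ≥0) (hv : v ≠ 0) (s : ℝ) (hs : 0 ≤ s) :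
    gaussianReal 0 v (Set.Ioi s) ≤ ENNReal.ofReal (Real.exp (-(s^2/(2*(v:ℝ)))) / 2) := by
  have hvpos : (0:ℝ) < (v:ℝ) := NNReal.coe_pos.mpr (pos_iff_ne_zero.mpr hv)
  have hexp : (0:ℝ) ≤ Real.exp (-(s^2/(2*(v:ℝ)))) := (Real.exp_pos _).le
  have hcmp : ∀ x ∈ Set.Ioi s, gaussianPDF 0 v x
      ≤ ENNReal.ofReal (Real.exp (-(s^2/(2*(v:ℝ))))) * gaussianPDF s v x := by
    intro x hx
    rw [Set.mem_Ioi] at hx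
    rw [gaussianPDF, gaussianPDF, ← ENNReal.ofReal_mul hexp]
    apply ENNReal.ofReal_le_ofReal
    have harg : Real.exp (-(x-0)^2/(2*(v:ℝ)))
        ≤ Real.exp (-(s^2/(2*(v:ℝ)))) * Real.exp (-(x-s)^2/(2*(v:ℝ))) := by
      rw [← Real.exp_add]
      apply Real.exp_le_exp.mpr
      rw [← sub_nonneg]
      field_simp
      have := mul_nonneg hs (sub_nonneg.mpr hx.le)
      nlinarith [mul_nonneg (mul_nonneg hs (sub_nonneg.mpr hx.le)) hvpos.le,
        mul_nonneg (mul_nonneg (mul_nonneg hs (sub_nonneg.mpr hx.le)) hvpos.le) hvpos.le]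
    rw [gaussianPDFReal, gaussianPDFReal]
    have hA : (0:ℝ) ≤ (Real.sqrt (2*π*(v:ℝ)))⁻¹ := by positivity
    nlinarith [mul_le_mul_of_nonneg_left harg hA]
  calc gaussianReal 0 v (Set.Ioi s)
      = ∫⁻ x in Set.Ioi s, gaussianPDF 0 v x := gaussianReal_apply 0 hv _
    _ ≤ ∫⁻ x in Set.Ioi s, ENNReal.ofReal (Real.exp (-(s^2/(2*(v:ℝ))))) * gaussianPDF s v x :=
        setLIntegral_mono ((measurable_gaussianPDF s v).const_mul _) hcmp
    _ = ENNReal.ofReal (Real.exp (-(s^2/(2*(v:ℝ))))) * ∫⁻ x in Set.Ioi s, gaussianPDF s v x :=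
        lintegral_const_mul _ (measurable_gaussianPDF s v)
    _ = ENNReal.ofReal (Real.exp (-(s^2/(2*(v:ℝ))))) * gaussianReal s v (Set.Ioi s) := by
        rw [gaussianReal_apply s hv]
    _ = ENNReal.ofReal (Real.exp (-(s^2/(2*(v:ℝ))))) * (1/2) := by
        rw [gauss_shift v hv, gauss_half v hv]
    _ = ENNReal.ofReal (Real.exp (-(s^2/(2*(v:ℝ)))) / 2) := by
        rw [ENNReal.ofReal_div_of_pos (by norm_num : (0:ℝ) < 2), mul_one_div]
        norm_num

lemma gauss_tail_neg (v : ℝ≥0) (hv : v ≠ 0) (s : ℝ) (hs : s ≤ 0) :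
    gaussianReal 0 v (Set.Ioi s)
      ≤ 1/2 + ENNReal.ofReal ((-s) * (Real.sqrt (2 * π * (v:ℝ)))⁻¹) := by
  have hsub : Set.Ioi s ⊆ Set.Ioc s 0 ∪ Set.Ioi 0 := by
    intro x hx
    rcases le_or_gt x 0 with h | h
    · exact Or.inl ⟨hx, h⟩
    · exact Or.inr h
  have hIoc : gaussianReal 0 v (Set.Ioc s 0)
      ≤ ENNReal.ofReal ((-s) * (Real.sqrt (2 * π * (v:ℝ)))⁻¹) := by
    rw [gaussianReal_apply 0 hv]
    calc ∫⁻ x in Set.Ioc s 0, gaussianPDF 0 v x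
        ≤ ∫⁻ _ in Set.Ioc s 0, ENNReal.ofReal ((Real.sqrt (2 * π * (v:ℝ)))⁻¹) := by
          apply setLIntegral_mono measurable_const
          intro x _
          apply ENNReal.ofReal_le_ofReal
          rw [gaussianPDFReal]
          calc (Real.sqrt (2 * π * (v:ℝ)))⁻¹ * Real.exp (-(x-0)^2/(2*(v:ℝ)))
              ≤ (Real.sqrt (2 * π * (v:ℝ)))⁻¹ * 1 := by
                apply mul_le_mul_of_nonneg_left _ (by positivity)
                apply Real.exp_le_one_iff.mpr
                rw [neg_div]
                simp only [neg_nonpos]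
                positivity
            _ = (Real.sqrt (2 * π * (v:ℝ)))⁻¹ := mul_one _
      _ = ENNReal.ofReal ((Real.sqrt (2 * π * (v:ℝ)))⁻¹) * volume (Set.Ioc s 0) :=
          setLIntegral_const _ _
      _ = ENNReal.ofReal ((-s) * (Real.sqrt (2 * π * (v:ℝ)))⁻¹) := by
          rw [Real.volume_Ioc, ← ENNReal.ofReal_mul (by positivity), zero_sub, mul_comm]
  calc gaussianReal 0 v (Set.Ioi s) ≤ gaussianReal 0 v (Set.Ioc s 0 ∪ Set.Ioi 0) :=
        measure_mono hsub
    _ ≤ gaussianReal 0 v (Set.Ioc s 0) + gaussianReal 0 v (Set.Ioi 0) := measure_union_le _ _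
    _ ≤ ENNReal.ofReal ((-s) * (Real.sqrt (2 * π * (v:ℝ)))⁻¹) + 1/2 := by
        rw [gauss_half v hv]
        exact add_le_add_left hIoc _
    _ = 1/2 + ENNReal.ofReal ((-s) * (Real.sqrt (2 * π * (v:ℝ)))⁻¹) := add_comm _ _

lemma exp_point2_le : Real.exp 0.2 ≤ 1.25 := by
  by_contra h
  push_neg at h
  have h5eq : Real.exp 0.2 ^ (5:ℕ) = Real.exp 1 := by
    rw [← Real.exp_nat_mul]; norm_num
  have h5 : (1.25:ℝ)^(5:ℕ) < Real.exp 0.2 ^ (5:ℕ) :=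
    pow_lt_pow_left₀ h (by norm_num) (by norm_num)
  rw [h5eq] at h5
  nlinarith [Real.exp_one_lt_d9]

lemma exp_quarter_le : Real.exp (1/4) ≤ 1.2841 := by
  by_contra h
  push_neg at h
  have h4eq : Real.exp (1/4) ^ (4:ℕ) = Real.exp 1 := by
    rw [← Real.exp_nat_mul]; norm_num
  have h4 : (1.2841:ℝ)^(4:ℕ) < Real.exp (1/4) ^ (4:ℕ) :=
    pow_lt_pow_left₀ h (by norm_num) (by norm_num)
  rw [h4eq] at h4
  nlinarith [Real.exp_one_lt_d9]

lemma exp_half_le : Real.exp (1/2) ≤ 1.65 := by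
  by_contra h
  push_neg at h
  have h2eq : Real.exp (1/2) ^ (2:ℕ) = Real.exp 1 := by
    rw [← Real.exp_nat_mul]; norm_num
  have h2 : (1.65:ℝ)^(2:ℕ) < Real.exp (1/2) ^ (2:ℕ) :=
    pow_lt_pow_left₀ h (by norm_num) (by norm_num)
  rw [h2eq] at h2
  nlinarith [Real.exp_one_lt_d9]

lemma cosh_le_25 (ε : ℝ) (h0 : 0 ≤ ε) (h1 : ε ≤ 1) :
    Real.exp (ε/2) + Real.exp (-(ε/2)) ≤ 2.5 := by
  have ha1 : 1 ≤ Real.exp (ε/2) := Real.one_le_exp (by linarith)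
  have haM : Real.exp (ε/2) ≤ 1.65 :=
    le_trans (Real.exp_le_exp.mpr (by linarith)) exp_half_le
  have hprod : Real.exp (ε/2) * Real.exp (-(ε/2)) = 1 := by
    rw [← Real.exp_add]; norm_num
  have hpos : 0 < Real.exp (-(ε/2)) := Real.exp_pos _
  nlinarith [mul_nonneg (by linarith : (0:ℝ) ≤ Real.exp (ε/2) - 1)
    (by linarith : (0:ℝ) ≤ 2 - Real.exp (ε/2))]

lemma log_ge_point2 (δ : ℝ) (hδ : 0 < δ) (hδ1 : δ < 1) : 0.2 ≤ Real.log (1.25/δ) := by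
  have h125 : (1.25:ℝ) ≤ 1.25/δ := by
    rw [le_div_iff₀ hδ]; nlinarith
  have h1 : Real.log 1.25 ≤ Real.log (1.25/δ) := Real.log_le_log (by norm_num) h125
  have h2 : (0.2:ℝ) ≤ Real.log 1.25 :=
    (Real.le_log_iff_exp_le (by norm_num)).mpr exp_point2_le
  linarith

lemma sqrt_two_pi_ge : 2.5 ≤ Real.sqrt (2*Real.pi) := by
  rw [Real.le_sqrt (by norm_num) (by positivity)]
  nlinarith [Real.pi_gt_d6]

lemma expE_le (V Δ ε δ L : ℝ) (hV : 0 < V) (hΔ : 0 < Δ) (hδ : 0 < δ)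
    (hL : L = Real.log (1.25/δ)) (hcal : L*(2*Δ^2) ≤ ε^2*V) :
    Real.exp (-(ε^2*V/(2*Δ^2) + Δ^2/(8*V))) ≤ δ/1.25 := by
  have hexpL : Real.exp (-L) = δ/1.25 := by
    rw [hL, Real.exp_neg, Real.exp_log (by positivity), inv_div]
  rw [← hexpL]
  apply Real.exp_le_exp.mpr
  have hA : L ≤ ε^2*V/(2*Δ^2) := by
    rw [le_div_iff₀ (by positivity)]; linarith
  have hB : (0:ℝ) ≤ Δ^2/(8*V) := by positivity
  linarith

lemma case1_real (V Δ ε δ L : ℝ) (hV : 0 < V) (hΔ : 0 < Δ) (hε : 0 < ε) (hε1 : ε ≤ 1)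
    (hδ : 0 < δ) (hL : L = Real.log (1.25/δ)) (hcal : L*(2*Δ^2) ≤ ε^2*V) :
    Real.exp (-((ε*V/Δ - Δ/2)^2/(2*V)))/2 + Real.exp (-((ε*V/Δ + Δ/2)^2/(2*V)))/2 ≤ δ := by
  have hid1 : -((ε*V/Δ - Δ/2)^2/(2*V)) = -(ε^2*V/(2*Δ^2) + Δ^2/(8*V)) + ε/2 := by
    field_simp; ring
  have hid2 : -((ε*V/Δ + Δ/2)^2/(2*V)) = -(ε^2*V/(2*Δ^2) + Δ^2/(8*V)) + (-(ε/2)) := by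
    field_simp; ring
  rw [hid1, hid2, Real.exp_add, Real.exp_add]
  have hE := expE_le V Δ ε δ L hV hΔ hδ hL hcal
  have hcosh := cosh_le_25 ε hε.le hε1
  have hEpos : (0:ℝ) < Real.exp (-(ε^2*V/(2*Δ^2) + Δ^2/(8*V))) := Real.exp_pos _
  have hcpos : (0:ℝ) < Real.exp (ε/2) + Real.exp (-(ε/2)) := by positivity
  have h2δ : Real.exp (-(ε^2*V/(2*Δ^2) + Δ^2/(8*V))) * (Real.exp (ε/2) + Real.exp (-(ε/2)))
      ≤ 2*δ := by
    calc Real.exp (-(ε^2*V/(2*Δ^2) + Δ^2/(8*V))) * (Real.exp (ε/2) + Real.exp (-(ε/2)))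
        ≤ (δ/1.25) * 2.5 := mul_le_mul hE hcosh hcpos.le (by positivity)
      _ = 2*δ := by ring
  linarith [h2δ]

set_option maxHeartbeats 2000000 in
lemma case2_real (V Δ ε δ L : ℝ) (hV : 0 < V) (hΔ : 0 < Δ) (hε : 0 < ε) (hε1 : ε ≤ 1)
    (hδ : 0 < δ) (hδ1 : δ < 1) (hL : L = Real.log (1.25/δ)) (hcal : L*(2*Δ^2) ≤ ε^2*V)
    (hneg : ε*V/Δ - Δ/2 < 0) :
    1/2 + (-(ε*V/Δ - Δ/2)) * (Real.sqrt (2*Real.pi*V))⁻¹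
      + Real.exp (-((ε*V/Δ + Δ/2)^2/(2*V)))/2 ≤ δ := by
  have hL02 : 0.2 ≤ L := hL ▸ log_ge_point2 δ hδ hδ1
  -- δ is close to 1
  have hεV : ε*V < Δ^2/2 := by
    have := mul_lt_mul_of_pos_right hneg hΔ
    rw [sub_mul, div_mul_cancel₀ _ hΔ.ne'] at this
    nlinarith
  have hLq : L < 1/4 := by
    nlinarith [mul_lt_mul_of_pos_left hεV hε, mul_pos hΔ hΔ, sq_nonneg ε,
      mul_le_mul_of_nonneg_right hε1 (mul_pos hV hε).le]
  have hδ97 : 0.97 ≤ δ := by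
    have h1 : Real.exp L < Real.exp (1/4) := Real.exp_lt_exp.mpr hLq
    have h2 : Real.exp L = 1.25/δ := by rw [hL, Real.exp_log (by positivity)]
    have h3 : (1.25:ℝ)/δ < 1.2841 := by linarith [exp_quarter_le]
    rw [div_lt_iff₀ hδ] at h3
    linarith
  -- middle term small
  have hmid : (-(ε*V/Δ - Δ/2)) * (Real.sqrt (2*Real.pi*V))⁻¹ ≤ 0.064 := by
    obtain ⟨w, hwdef⟩ : ∃ w, w = Real.sqrt V := ⟨_, rfl⟩
    have hwpos : 0 < w := hwdef ▸ Real.sqrt_pos.mpr hV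
    have hw2 : w^2 = V := hwdef ▸ Real.sq_sqrt hV.le
    obtain ⟨b, hbdef⟩ : ∃ b, b = ε*w/Δ := ⟨_, rfl⟩
    have hbpos : 0 < b := by rw [hbdef]; positivity
    have hbΔ : b*Δ = ε*w := by rw [hbdef]; field_simp
    have hw2e : ε^2*w^2 = ε^2*V := by rw [hw2]
    have hb2Δ : b^2*Δ^2 = ε^2*V := by
      have h := congrArg (·^2) hbΔ
      linarith [h, hw2e, sq_nonneg (b*Δ), mul_pow b Δ 2, mul_pow ε w 2]
    have hb2 : 0.4 ≤ b^2 := by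
      have h04 : 0.4*Δ^2 ≤ b^2*Δ^2 := by linarith [hb2Δ, hcal, mul_le_mul_of_nonneg_right hL02 (sq_nonneg Δ)]
      exact le_of_mul_le_mul_right h04 (by positivity)
    have hb : 0.632 ≤ b := by nlinarith
    have hkey : ε ≤ 2*b^2 + 0.32*b := by nlinarith [sq_nonneg (b-0.632)]
    have e3 : b*Δ*Δ = ε*w*Δ := by rw [hbΔ]
    have h1 : ε*Δ^2 ≤ 2*ε^2*w^2 + 0.32*ε*w*Δ := by
      have hmul := mul_le_mul_of_nonneg_right hkey (sq_nonneg Δ)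
      have e2 : (b*Δ)^2 = (ε*w)^2 := by rw [hbΔ]
      linarith [hmul, e2, e3]
    have h2 : Δ^2 ≤ 2*ε*V + 0.32*w*Δ := by
      have h3 : ε*Δ^2 ≤ ε*(2*ε*V + 0.32*w*Δ) := by linarith [h1, hw2e]
      exact le_of_mul_le_mul_left (by linarith [h3]) hε
    have h4 : (-(ε*V/Δ - Δ/2))*(2*Δ) = Δ^2 - 2*ε*V := by field_simp; ring
    have hnum : -(ε*V/Δ - Δ/2) ≤ 0.16*w := by
      have h6 : (-(ε*V/Δ - Δ/2))*(2*Δ) ≤ (0.16*w)*(2*Δ) := by rw [h4]; linarith [h2]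
      exact le_of_mul_le_mul_right h6 (by positivity)
    have hsplit : Real.sqrt (2*Real.pi*V) = Real.sqrt (2*Real.pi) * w := by
      rw [hwdef, ← Real.sqrt_mul (by positivity)]
    have hs25 : 2.5 ≤ Real.sqrt (2*Real.pi) := sqrt_two_pi_ge
    have hs1 : 2.5*w ≤ Real.sqrt (2*Real.pi*V) := by
      rw [hsplit]
      exact mul_le_mul_of_nonneg_right hs25 hwpos.le
    have hinv : (Real.sqrt (2*Real.pi*V))⁻¹ ≤ (2.5*w)⁻¹ :=
      inv_anti₀ (by positivity) hs1
    calc (-(ε*V/Δ - Δ/2)) * (Real.sqrt (2*Real.pi*V))⁻¹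
        ≤ (0.16*w) * (2.5*w)⁻¹ := by
          apply mul_le_mul hnum hinv (by positivity) (by positivity)
      _ = 0.064 := by field_simp; ring
  -- last term
  have hlast : Real.exp (-((ε*V/Δ + Δ/2)^2/(2*V)))/2 ≤ δ/2.5 := by
    have hid2 : -((ε*V/Δ + Δ/2)^2/(2*V)) = -(ε^2*V/(2*Δ^2) + Δ^2/(8*V)) + (-(ε/2)) := by
      field_simp; ring
    rw [hid2, Real.exp_add]
    have hE := expE_le V Δ ε δ L hV hΔ hδ hL hcal
    have he1 : Real.exp (-(ε/2)) ≤ 1 := Real.exp_le_one_iff.mpr (by linarith)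
    have hEpos : (0:ℝ) < Real.exp (-(ε^2*V/(2*Δ^2) + Δ^2/(8*V))) := Real.exp_pos _
    have hprod : Real.exp (-(ε^2*V/(2*Δ^2) + Δ^2/(8*V))) * Real.exp (-(ε/2)) ≤ (δ/1.25)*1 :=
      mul_le_mul hE he1 (Real.exp_pos _).le (by positivity)
    norm_num at hprod ⊢
    linarith [hprod]
  norm_num at hmid hδ97 hlast ⊢
  linarith



end auxGaussTail

/-- privacy loss tail bound for the Gaussian mechanism: with
`Z ~ N(0, σ²)` and privacy loss `L(z) = (2zΔ + Δ²)/(2σ²)`, if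
`σ² ≥ 2 log(1.25/δ) (Δ/ε)²` with `0 < ε ≤ 1`, then `P(|L(Z)| > ε) ≤ δ`. -/
theorem gaussian_privacy_loss_tail
    (σ2 : NNReal) (hσ : (0 : ℝ) < σ2)
    (Δ ε δ : ℝ) (hΔ : 0 < Δ) (hε : 0 < ε) (hε1 : ε ≤ 1) (hδ : 0 < δ)
    (hcal : (σ2 : ℝ) ≥ 2 * Real.log (1.25 / δ) * (Δ / ε) ^ 2) :
    gaussianReal 0 σ2 {z : ℝ | ε < |(2 * z * Δ + Δ ^ 2) / (2 * (σ2 : ℝ))|} ≤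
      ENNReal.ofReal δ := by
  rcases le_or_gt 1 δ with h1 | h1
  · calc gaussianReal 0 σ2 {z : ℝ | ε < |(2 * z * Δ + Δ ^ 2) / (2 * (σ2 : ℝ))|} ≤ 1 :=
        prob_le_one
      _ = ENNReal.ofReal 1 := ENNReal.ofReal_one.symm
      _ ≤ ENNReal.ofReal δ := ENNReal.ofReal_le_ofReal h1
  have hv : σ2 ≠ 0 := by
    intro h
    rw [h] at hσ
    simp at hσ
  have hV : (0:ℝ) < (σ2:ℝ) := hσ
  have hcal' : Real.log (1.25/δ) * (2*Δ^2) ≤ ε^2 * (σ2:ℝ) := by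
    have h : 2 * Real.log (1.25/δ) * (Δ^2/ε^2) ≤ (σ2:ℝ) := by
      rw [← div_pow]; exact hcal
    have h2 := mul_le_mul_of_nonneg_right h (sq_nonneg ε)
    have h3 : 2 * Real.log (1.25/δ) * (Δ^2/ε^2) * ε^2 = Real.log (1.25/δ) * (2*Δ^2) := by
      field_simp
    rw [h3] at h2
    linarith [h2]
  have hsub : {z : ℝ | ε < |(2 * z * Δ + Δ ^ 2) / (2 * (σ2 : ℝ))|}
      ⊆ Set.Iio (-(ε*(σ2:ℝ)/Δ + Δ/2)) ∪ Set.Ioi (ε*(σ2:ℝ)/Δ - Δ/2) := by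
    intro z hz
    simp only [Set.mem_setOf_eq] at hz
    simp only [Set.mem_union, Set.mem_Iio, Set.mem_Ioi]
    by_contra hcon
    push_neg at hcon
    obtain ⟨hc1, hc2⟩ := hcon
    have hq : (ε*(σ2:ℝ)/Δ)*Δ = ε*(σ2:ℝ) := div_mul_cancel₀ _ hΔ.ne'
    have habs : |(2 * z * Δ + Δ ^ 2) / (2 * (σ2 : ℝ))| ≤ ε := by
      rw [abs_div, abs_of_pos (by positivity : (0:ℝ) < 2*(σ2:ℝ)),
        div_le_iff₀ (by positivity), abs_le]
      constructor
      · linarith [mul_le_mul_of_nonneg_right hc1 hΔ.le, hq]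
      · linarith [mul_le_mul_of_nonneg_right hc2 hΔ.le, hq]
    exact absurd hz (not_lt.mpr habs)
  have hunion : gaussianReal 0 σ2 {z : ℝ | ε < |(2 * z * Δ + Δ ^ 2) / (2 * (σ2 : ℝ))|}
      ≤ gaussianReal 0 σ2 (Set.Iio (-(ε*(σ2:ℝ)/Δ + Δ/2)))
        + gaussianReal 0 σ2 (Set.Ioi (ε*(σ2:ℝ)/Δ - Δ/2)) :=
    le_trans (measure_mono hsub) (measure_union_le _ _)
  have hIio : gaussianReal 0 σ2 (Set.Iio (-(ε*(σ2:ℝ)/Δ + Δ/2)))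
      = gaussianReal 0 σ2 (Set.Ioi (ε*(σ2:ℝ)/Δ + Δ/2)) := gauss_neg σ2 hv _
  have hT1 : gaussianReal 0 σ2 (Set.Ioi (ε*(σ2:ℝ)/Δ + Δ/2))
      ≤ ENNReal.ofReal (Real.exp (-((ε*(σ2:ℝ)/Δ + Δ/2)^2/(2*(σ2:ℝ))))/2) :=
    gauss_tail σ2 hv _ (by positivity)
  rcases le_or_gt 0 (ε*(σ2:ℝ)/Δ - Δ/2) with hc | hc
  · -- case 1 : right tail cutoff is nonnegative
    have hT2 : gaussianReal 0 σ2 (Set.Ioi (ε*(σ2:ℝ)/Δ - Δ/2))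
        ≤ ENNReal.ofReal (Real.exp (-((ε*(σ2:ℝ)/Δ - Δ/2)^2/(2*(σ2:ℝ))))/2) :=
      gauss_tail σ2 hv _ hc
    have hreal := case1_real (σ2:ℝ) Δ ε δ _ hV hΔ hε hε1 hδ rfl hcal'
    calc gaussianReal 0 σ2 {z : ℝ | ε < |(2 * z * Δ + Δ ^ 2) / (2 * (σ2 : ℝ))|}
        ≤ gaussianReal 0 σ2 (Set.Iio (-(ε*(σ2:ℝ)/Δ + Δ/2)))
          + gaussianReal 0 σ2 (Set.Ioi (ε*(σ2:ℝ)/Δ - Δ/2)) := hunion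
      _ ≤ ENNReal.ofReal (Real.exp (-((ε*(σ2:ℝ)/Δ + Δ/2)^2/(2*(σ2:ℝ))))/2)
          + ENNReal.ofReal (Real.exp (-((ε*(σ2:ℝ)/Δ - Δ/2)^2/(2*(σ2:ℝ))))/2) :=
          add_le_add (le_trans (le_of_eq hIio) hT1) hT2
      _ = ENNReal.ofReal (Real.exp (-((ε*(σ2:ℝ)/Δ + Δ/2)^2/(2*(σ2:ℝ))))/2
          + Real.exp (-((ε*(σ2:ℝ)/Δ - Δ/2)^2/(2*(σ2:ℝ))))/2) :=
          (ENNReal.ofReal_add (by positivity) (by positivity)).symm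
      _ ≤ ENNReal.ofReal δ := ENNReal.ofReal_le_ofReal (by linarith [hreal])
  · -- case 2 : right tail cutoff is negative
    have hT2 := gauss_tail_neg σ2 hv _ hc.le
    have hreal := case2_real (σ2:ℝ) Δ ε δ _ hV hΔ hε hε1 hδ h1 rfl hcal' hc
    have hhalf : (1/2 : ENNReal) = ENNReal.ofReal (1/2) := by
      rw [ENNReal.ofReal_div_of_pos (by norm_num : (0:ℝ) < 2)]
      norm_num
    calc gaussianReal 0 σ2 {z : ℝ | ε < |(2 * z * Δ + Δ ^ 2) / (2 * (σ2 : ℝ))|}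
        ≤ gaussianReal 0 σ2 (Set.Iio (-(ε*(σ2:ℝ)/Δ + Δ/2)))
          + gaussianReal 0 σ2 (Set.Ioi (ε*(σ2:ℝ)/Δ - Δ/2)) := hunion
      _ ≤ ENNReal.ofReal (Real.exp (-((ε*(σ2:ℝ)/Δ + Δ/2)^2/(2*(σ2:ℝ))))/2)
          + (1/2 + ENNReal.ofReal ((-(ε*(σ2:ℝ)/Δ - Δ/2)) * (Real.sqrt (2 * Real.pi * (σ2:ℝ)))⁻¹)) := by
          exact add_le_add (le_trans (le_of_eq hIio) hT1) hT2
      _ = ENNReal.ofReal (Real.exp (-((ε*(σ2:ℝ)/Δ + Δ/2)^2/(2*(σ2:ℝ))))/2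
          + (1/2 + (-(ε*(σ2:ℝ)/Δ - Δ/2)) * (Real.sqrt (2 * Real.pi * (σ2:ℝ)))⁻¹)) := by
          have hmne : (0:ℝ) ≤ (-(ε*(σ2:ℝ)/Δ - Δ/2)) * (Real.sqrt (2 * Real.pi * (σ2:ℝ)))⁻¹ :=
            mul_nonneg (by linarith) (by positivity)
          rw [hhalf, ← ENNReal.ofReal_add (by norm_num) hmne,
            ← ENNReal.ofReal_add (by positivity) (by linarith [hmne])]
      _ ≤ ENNReal.ofReal δ := ENNReal.ofReal_le_ofReal (by linarith [hreal])
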